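/- If G is a finite digraph containing an in-out cycle (a cycle in which some vertex has in-degree greater than 1 and some vertex has out-degree greater than 1), then the set of paths of G is not well quasi-ordered under the subpath order; in particular, there exists an infinite antichain of paths. -/

import Mathlib

private def ACF {V : Type*} (Q : ℕ → V) (x y : V) (L b : ℕ) (k i : ℕ) : V :=
  if i = 0 then x else if i = (k+1)*L + b + 2 then y else Q (i - 1)

private def ACf {V : Type*} (Q : ℕ → V) (x y : V) (L b : ℕ) (k : ℕ) : List V :=
  (List.range ((k+1)*L + b + 3)).map (ACF Q x y L b k)

private lemma ACF_zero {V : Type*} (Q : ℕ → V) (x y : V) (L b k : ℕ) :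
    ACF Q x y L b k 0 = x := by
  unfold ACF
  rw [if_pos rfl]

private lemma ACF_last {V : Type*} (Q : ℕ → V) (x y : V) (L b k i : ℕ)
    (h : i = (k+1)*L + b + 2) : ACF Q x y L b k i = y := by
  subst h
  unfold ACF
  rw [if_neg (by omega), if_pos rfl]

private lemma ACF_mid {V : Type*} (Q : ℕ → V) (x y : V) (L b k i : ℕ)
    (h0 : i ≠ 0) (h1 : i ≠ (k+1)*L + b + 2) : ACF Q x y L b k i = Q (i - 1) := by
  unfold ACF
  rw [if_neg h0, if_neg h1]

private lemma ACf_length {V : Type*} (Q : ℕ → V) (x y : V) (L b k : ℕ) :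
    (ACf Q x y L b k).length = (k+1)*L + b + 3 := by simp [ACf]

private lemma ACf_getElem {V : Type*} (Q : ℕ → V) (x y : V) (L b k i : ℕ)
    (h : i < (ACf Q x y L b k).length) :
    (ACf Q x y L b k)[i] = ACF Q x y L b k i := by
  simp [ACf]

private lemma getElem_idx_congr {V : Type*} (l : List V) {i j : ℕ} (h : i = j)
    (hi : i < l.length) : l[i]'hi = l[j]'(h ▸ hi) := by subst h; rfl

private lemma aux_antichain {V : Type*} (E : V → V → Prop) (L b : ℕ) (hL : 0 < L) (hb : b < L)
    (Q : ℕ → V) (hper : ∀ i, Q (i + L) = Q i) (hQ : ∀ i, E (Q i) (Q (i + 1)))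
    (x y : V) (hx : E x (Q 0)) (hy : E (Q b) y)
    (hx' : x ≠ Q (L - 1)) (hy' : y ≠ Q (b + 1)) :
    ∃ f : ℕ → List V, (∀ k, f k ≠ [] ∧ (f k).Chain' E) ∧
      ∀ j k, j ≠ k → ¬ f j <:+: f k := by
  have hper' : ∀ m i, Q (i + m * L) = Q i := by
    intro m
    induction m with
    | zero => simp
    | succ n ih =>
        intro i
        have h1 : i + (n+1) * L = (i + n * L) + L := by ring
        rw [h1, hper, ih]
  have hmod : ∀ i, Q i = Q (i % L) := by
    intro i
    have h1 : i % L + (i / L) * L = i := by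
      rw [Nat.mul_comm]; exact Nat.mod_add_div i L
    conv_lhs => rw [← h1]
    exact hper' (i / L) (i % L)
  refine ⟨ACf Q x y L b, ?_, ?_⟩
  · intro k
    have hLk : L ≤ (k+1)*L := Nat.le_mul_of_pos_left L (by omega)
    constructor
    · have := ACf_length Q x y L b k
      intro hnil
      rw [hnil] at this
      simp at this
    · rw [List.Chain', List.isChain_iff_getElem]
      intro i hi
      rw [ACf_length] at hi
      rw [ACf_getElem, ACf_getElem]
      rcases Nat.eq_zero_or_pos i with h0 | h0
      · subst h0
        rw [ACF_zero, ACF_mid Q x y L b k 1 (by omega) (by omega)]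
        exact hx
      rcases eq_or_ne i ((k+1)*L + b + 1) with he | he
      · rw [ACF_mid Q x y L b k i (by omega) (by omega),
          ACF_last Q x y L b k (i+1) (by omega)]
        rw [show i - 1 = b + (k+1) * L from by omega, hper']
        exact hy
      · rw [ACF_mid Q x y L b k i (by omega) (by omega),
          ACF_mid Q x y L b k (i+1) (by omega) (by omega)]
        rw [show i + 1 - 1 = (i - 1) + 1 from by omega]
        exact hQ (i - 1)
  · intro j k hjk h
    have hLj : L ≤ (j+1)*L := Nat.le_mul_of_pos_left L (by omega)
    have hlenle := h.length_le
    rw [ACf_length, ACf_length] at hlenle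
    have hjk' : j < k := by
      rcases Nat.lt_or_ge j k with h' | h'
      · exact h'
      · exfalso
        rcases Nat.eq_or_lt_of_le h' with h'' | h''
        · exact hjk h''.symm
        · have : (k+1)*L < (j+1)*L :=
            Nat.mul_lt_mul_of_lt_of_le (by omega) (le_refl L) hL
          omega
    have hNjk : (j+1)*L < (k+1)*L :=
      Nat.mul_lt_mul_of_lt_of_le (by omega) (le_refl L) hL
    obtain ⟨s, t, hst⟩ := h
    have hst' : s ++ (ACf Q x y L b j ++ t) = ACf Q x y L b k := by
      rw [← List.append_assoc]; exact hst
    have hlens : s.length + (((j+1)*L + b + 3) + t.length) = (k+1)*L + b + 3 := by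
      have := congrArg List.length hst'
      simp only [List.length_append, ACf_length] at this
      omega
    set T := s.length with hT
    have M : ∀ i, i < (j+1)*L + b + 3 →
        ACF Q x y L b k (T + i) = ACF Q x y L b j i := by
      intro i hi
      have hik : T + i < (ACf Q x y L b k).length := by rw [ACf_length]; omega
      have hij : i < (ACf Q x y L b j).length := by rw [ACf_length]; omega
      have h1 : (ACf Q x y L b k)[T + i]'hik
          = (s ++ (ACf Q x y L b j ++ t))[T + i]'(by rw [hst']; exact hik) := by
        apply (getElem_idx_congr _ rfl _).trans
        congr 1
        exact hst'.symm
      rw [List.getElem_append_right (by omega)] at h1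
      have h2 : T + i - T = i := by omega
      rw [getElem_idx_congr _ h2] at h1
      rw [List.getElem_append_left hij] at h1
      rw [ACf_getElem, ACf_getElem] at h1
      exact h1
    rcases Nat.eq_zero_or_pos T with hT0 | hT0
    · -- prefix case: the final letter y of (f j) matches inside the periodic part
      have hM := M ((j+1)*L + b + 2) (by omega)
      rw [hT0, Nat.zero_add] at hM
      rw [ACF_mid Q x y L b k ((j+1)*L + b + 2) (by omega) (by omega)] at hM
      rw [ACF_last Q x y L b j ((j+1)*L + b + 2) rfl] at hM
      rw [show (j+1)*L + b + 2 - 1 = (b+1) + (j+1)*L from by omega, hper'] at hM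
      exact hy' hM.symm
    · -- internal case: the initial letter x of (f j) matches inside the periodic part
      have hxT : Q (T - 1) = x := by
        have hM := M 0 (by omega)
        rw [Nat.add_zero, ACF_zero] at hM
        rwa [ACF_mid Q x y L b k T (by omega) (by omega)] at hM
      have claimQ : ∀ r, r < L → Q (T + r) = Q r := by
        intro r hr
        have hM := M (r + 1) (by omega)
        rw [ACF_mid Q x y L b j (r+1) (by omega) (by omega)] at hM
        rw [ACF_mid Q x y L b k (T + (r+1)) (by omega) (by omega)] at hM
        rw [show T + (r+1) - 1 = T + r from by omega,
          show r + 1 - 1 = r from by omega] at hM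
        exact hM
      have general : ∀ m, Q (m + T) = Q m := by
        intro m
        have hdm := Nat.div_add_mod m L
        have hcomm : L * (m / L) = (m / L) * L := Nat.mul_comm _ _
        have e : m + T = (T + m % L) + (m / L) * L := by omega
        rw [e, hper', claimQ _ (Nat.mod_lt _ hL)]
        exact (hmod m).symm
      have final : Q (T - 1) = Q (L - 1) := by
        calc Q (T - 1) = Q ((T - 1) + L) := (hper _).symm
          _ = Q ((L - 1) + T) := by rw [show (T - 1) + L = (L - 1) + T from by omega]
          _ = Q (L - 1) := general (L - 1)
      exact hx' (hxT ▸ final)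

/-- If a finite digraph contains an in-out cycle (a cycle in which some
vertex has in-degree > 1 and some vertex has out-degree > 1), then the set of paths
is not wqo under the subpath (infix) order: there is an infinite antichain of paths. -/
theorem stmt0 {V : Type*} [Fintype V] (E : V → V → Prop) (c : List V)
    (hchain : c.Chain' E) (hlen : 2 ≤ c.length) (hcyc : c.head? = c.getLast?)
    (u w : V) (hu : u ∈ c) (hw : w ∈ c)
    (hin : 1 < Set.ncard {x | E x u}) (hout : 1 < Set.ncard {y | E w y}) :
    ∃ f : ℕ → List V, (∀ k, f k ≠ [] ∧ (f k).Chain' E) ∧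
      ∀ j k, j ≠ k → ¬ f j <:+: f k := by
  obtain ⟨L, hLdef⟩ : ∃ L, c.length = L + 1 := ⟨c.length - 1, by omega⟩
  have hL0 : 0 < L := by omega
  have hLlt : L < c.length := by omega
  -- closed walk: last = head
  have hcl : (c)[L]'hLlt = (c)[0]'(by omega) := by
    have h1 : c.head? = some ((c)[0]'(by omega)) := by
      rw [List.head?_eq_getElem?]
      exact List.getElem?_eq_getElem (by omega)
    have h2 : c.getLast? = some ((c)[L]'hLlt) := by
      rw [List.getLast?_eq_getElem?]
      rw [show c.length - 1 = L from by omega]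
      exact List.getElem?_eq_getElem hLlt
    exact (Option.some.inj (h1.symm.trans (hcyc.trans h2))).symm
  -- chain edges
  have hstep : ∀ r, ∀ hr : r < L, E ((c)[r]'(by omega)) ((c)[r+1]'(by omega)) := by
    rw [List.Chain', List.isChain_iff_getElem] at hchain
    intro r hr
    have := hchain r (by omega)
    simpa using this
  -- successor mod helper
  have hsucc : ∀ n, (n + 1) % L = (n % L + 1) % L := by
    intro n
    rw [Nat.add_mod n 1 L, Nat.add_mod (n % L) 1 L, Nat.mod_mod_of_dvd _ (dvd_refl L)]
  -- index for u
  obtain ⟨a, ha, hca⟩ : ∃ a, ∃ h : a < L, (c)[a]'(h.trans hLlt) = u := by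
    obtain ⟨a0, ha0, hca0⟩ := List.mem_iff_getElem.mp hu
    refine ⟨a0 % L, Nat.mod_lt _ hL0, ?_⟩
    rcases Nat.lt_or_ge a0 L with h' | h'
    · exact (getElem_idx_congr c (Nat.mod_eq_of_lt h') _).trans hca0
    · have he : a0 = L := by omega
      have he2 : a0 % L = 0 := by rw [he, Nat.mod_self]
      exact (getElem_idx_congr c he2 _).trans
        (hcl.symm.trans ((getElem_idx_congr c he ha0).symm.trans hca0))
  -- index for w
  obtain ⟨a2, ha2, hca2⟩ : ∃ a2, ∃ h : a2 < L, (c)[a2]'(h.trans hLlt) = w := by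
    obtain ⟨a1, ha1, hca1⟩ := List.mem_iff_getElem.mp hw
    refine ⟨a1 % L, Nat.mod_lt _ hL0, ?_⟩
    rcases Nat.lt_or_ge a1 L with h' | h'
    · exact (getElem_idx_congr c (Nat.mod_eq_of_lt h') _).trans hca1
    · have he : a1 = L := by omega
      have he2 : a1 % L = 0 := by rw [he, Nat.mod_self]
      exact (getElem_idx_congr c he2 _).trans
        (hcl.symm.trans ((getElem_idx_congr c he ha1).symm.trans hca1))
  -- the offset b
  obtain ⟨b, hb, hab⟩ : ∃ b, b < L ∧ (a + b) % L = a2 := by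
    refine ⟨(L - a + a2) % L, Nat.mod_lt _ hL0, ?_⟩
    have h1 : (a + (L - a + a2) % L) % L = (a + (L - a + a2)) % L := by
      rw [Nat.add_mod a ((L - a + a2) % L) L, Nat.mod_mod_of_dvd _ (dvd_refl L),
        ← Nat.add_mod a (L - a + a2) L]
    have h2 : a + (L - a + a2) = L + a2 := by omega
    rw [h1, h2, Nat.add_mod_left, Nat.mod_eq_of_lt ha2]
  -- the periodic word
  obtain ⟨Q, hper, hQ, hQ0, hQb⟩ :
      ∃ Q : ℕ → V, (∀ i, Q (i + L) = Q i) ∧ (∀ i, E (Q i) (Q (i + 1)))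
        ∧ Q 0 = u ∧ Q b = w := by
    refine ⟨fun i => (c)[(a + i) % L]'((Nat.mod_lt _ hL0).trans hLlt), ?_, ?_, ?_, ?_⟩
    · intro i
      exact getElem_idx_congr c
        (by rw [show a + (i + L) = (a + i) + L from by omega, Nat.add_mod_right]) _
    · intro i
      have hidx : (a + (i + 1)) % L = ((a + i) % L + 1) % L := by
        rw [show a + (i + 1) = (a + i) + 1 from by omega, hsucc]
      have hr : (a + i) % L < L := Nat.mod_lt _ hL0
      rcases Nat.lt_or_ge ((a + i) % L + 1) L with h' | h'
      · have h2 : (a + (i + 1)) % L = (a + i) % L + 1 := by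
          rw [hidx, Nat.mod_eq_of_lt h']
        have h3 := hstep ((a + i) % L) hr
        rwa [← getElem_idx_congr c h2 ((Nat.mod_lt _ hL0).trans hLlt)] at h3
      · have hrL : (a + i) % L + 1 = L := by omega
        have h2 : (a + (i + 1)) % L = 0 := by rw [hidx, hrL, Nat.mod_self]
        have h3 := hstep ((a + i) % L) hr
        rw [getElem_idx_congr c hrL, hcl,
          ← getElem_idx_congr c h2 ((Nat.mod_lt _ hL0).trans hLlt)] at h3
        exact h3
    · exact (getElem_idx_congr c
        (by rw [Nat.add_zero, Nat.mod_eq_of_lt ha]) _).trans hca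
    · exact (getElem_idx_congr c hab _).trans hca2
  -- choose x and y
  obtain ⟨x1, x2, hx1, hx2, hx12⟩ := (Set.one_lt_ncard_iff (Set.toFinite _)).mp hin
  obtain ⟨y1, y2, hy1, hy2, hy12⟩ := (Set.one_lt_ncard_iff (Set.toFinite _)).mp hout
  simp only [Set.mem_setOf_eq] at hx1 hx2 hy1 hy2
  obtain ⟨x, hxE, hxne⟩ : ∃ x, E x u ∧ x ≠ Q (L - 1) := by
    by_cases hc : x1 = Q (L - 1)
    · exact ⟨x2, hx2, fun h => hx12 (hc.trans h.symm)⟩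
    · exact ⟨x1, hx1, hc⟩
  obtain ⟨y, hyE, hyne⟩ : ∃ y, E w y ∧ y ≠ Q (b + 1) := by
    by_cases hc : y1 = Q (b + 1)
    · exact ⟨y2, hy2, fun h => hy12 (hc.trans h.symm)⟩
    · exact ⟨y1, hy1, hc⟩
  exact aux_antichain E L b hL0 hb Q hper hQ x y (hQ0.symm ▸ hxE) (hQb.symm ▸ hyE) hxne hyne
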